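/- Let X, Y, Z ⊆ U and let p be a complete pattern not containing labels of X ∪ Y ∪ Z in non-singleton sets; define p₀ = p ∪ {X ∪ Y, Z}, p₁ = p ∪ {Y ∪ Z, X}, p₂ = p ∪ {X ∪ Z, Y}. Then {p₁, p₂} jointly dominates p₀: for every pattern r with p₀ ∼ r, at least one of p₁ ∼ r or p₂ ∼ r holds. -/

import Mathlib

open Finset
open scoped Classical

namespace PatternST

variable {α : Type*} [DecidableEq α]

/-- `p` is a pattern over ground set `U` with zero element `z`:
a family of subsets of `U ∪ {z}` with exactly one member containing `z`. -/
def IsPattern (z : α) (U : Finset α) (p : Finset (Finset α)) : Prop :=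
  (∀ S ∈ p, S ⊆ insert z U) ∧ ∃! S, S ∈ p ∧ z ∈ S

/-- Two sets are linked if one belongs to `p`, the other to `q`, and they intersect. -/
def linkRel (p q : Finset (Finset α)) (S T : Finset α) : Prop :=
  ((S ∈ p ∧ T ∈ q) ∨ (S ∈ q ∧ T ∈ p)) ∧ (S ∩ T).Nonempty

/-- Reflexive-transitive (and, by symmetry of `linkRel`, symmetric) closure. -/
def conn (p q : Finset (Finset α)) : Finset α → Finset α → Prop :=
  Relation.ReflTransGen (linkRel p q)

/-- The join `p ⋈ q`: unions of the equivalence classes of `conn` on `p ∪ q`. -/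
noncomputable def pjoin (p q : Finset (Finset α)) : Finset (Finset α) :=
  (p ∪ q).image fun S => ((p ∪ q).filter fun T => conn p q S T).sup id

/-- `p` and `q` are consistent if `p ⋈ q` consists of a single set. -/
def consistent (p q : Finset (Finset α)) : Prop := (pjoin p q).card = 1

/-- The labels (elements of `U`, i.e. everything except `z`) occurring in `p`. -/
def lbs (z : α) (p : Finset (Finset α)) : Finset α := (p.sup id).erase z

/-- The labels appearing as singletons in `p`. -/
def sing (z : α) (p : Finset (Finset α)) : Finset α :=
  (lbs z p).filter fun u => ({u} : Finset α) ∈ p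

/-- A pattern is complete if every occurring label occurs as a singleton. -/
def Complete (z : α) (p : Finset (Finset α)) : Prop := lbs z p = sing z p


lemma linkRel_symm {p q : Finset (Finset α)} {S T : Finset α}
    (h : linkRel p q S T) : linkRel p q T S := by
  obtain ⟨h1, u, hu⟩ := h
  refine ⟨h1.symm.imp And.symm And.symm, ⟨u, ?_⟩⟩
  simp only [Finset.mem_inter] at hu ⊢
  exact hu.symm

lemma conn_symm {p q : Finset (Finset α)} {S T : Finset α}
    (h : conn p q S T) : conn p q T S :=
  (@Relation.ReflTransGen.symmetric _ _ ⟨fun _ _ h => linkRel_symm h⟩).symm _ _ h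

lemma conn_mono {p p' q : Finset (Finset α)} (hpp : p ⊆ p') {S T : Finset α}
    (h : conn p q S T) : conn p' q S T := by
  refine Relation.ReflTransGen.mono ?_ S T h
  rintro a b ⟨h1 | h1, h2⟩
  · exact ⟨Or.inl ⟨hpp h1.1, h1.2⟩, h2⟩
  · exact ⟨Or.inr ⟨h1.1, hpp h1.2⟩, h2⟩

lemma conn_empty {p q : Finset (Finset α)} {T : Finset α}
    (h : conn p q ∅ T) : T = ∅ := by
  induction h with
  | refl => rfl
  | tail _ hlink ih =>
    subst ih
    simpa using hlink.2

lemma consistent_iff (q r : Finset (Finset α)) :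
    consistent q r ↔ ((q ∪ r).Nonempty ∧ ∀ S ∈ q ∪ r, ∀ T ∈ q ∪ r, conn q r S T) := by
  constructor
  · intro h
    obtain ⟨a, ha⟩ := Finset.card_eq_one.mp h
    have hne : (q ∪ r).Nonempty := by
      rw [Finset.nonempty_iff_ne_empty]
      intro h0
      rw [pjoin, h0, Finset.image_empty] at ha
      exact (Finset.singleton_ne_empty a) ha.symm
    refine ⟨hne, fun S hS T hT => ?_⟩
    have hfS : ((q ∪ r).filter fun M => conn q r S M).sup id = a := by
      have : ((q ∪ r).filter fun M => conn q r S M).sup id ∈ pjoin q r :=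
        Finset.mem_image_of_mem _ hS
      rw [ha] at this; exact Finset.mem_singleton.mp this
    have hfT : ((q ∪ r).filter fun M => conn q r T M).sup id = a := by
      have : ((q ∪ r).filter fun M => conn q r T M).sup id ∈ pjoin q r :=
        Finset.mem_image_of_mem _ hT
      rw [ha] at this; exact Finset.mem_singleton.mp this
    by_contra hST
    set KS := (q ∪ r).filter fun M => conn q r S M with hKS
    set KT := (q ∪ r).filter fun M => conn q r T M with hKT
    have hSK : S ∈ KS := Finset.mem_filter.mpr ⟨hS, Relation.ReflTransGen.refl⟩
    have hTK : T ∈ KT := Finset.mem_filter.mpr ⟨hT, Relation.ReflTransGen.refl⟩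
    have hnolink : ∀ M ∈ KS, ∀ N ∈ KT, ¬ linkRel q r M N := by
      intro M hM N hN hl
      exact hST (((Finset.mem_filter.mp hM).2.trans
        (Relation.ReflTransGen.single hl)).trans (conn_symm (Finset.mem_filter.mp hN).2))
    by_cases hES : ∃ M ∈ KS, ∃ N ∈ KS, linkRel q r M N
    · obtain ⟨M, hM, N, hN, hl⟩ := hES
      obtain ⟨u, hu⟩ := hl.2
      rw [Finset.mem_inter] at hu
      have huS : u ∈ KS.sup id := Finset.mem_sup.mpr ⟨M, hM, hu.1⟩
      have huT : u ∈ KT.sup id := by rw [hfT, ← hfS]; exact huS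
      obtain ⟨P, hP, huP⟩ := Finset.mem_sup.mp huT
      have hPqr : P ∈ q ∪ r := (Finset.mem_filter.mp hP).1
      rcases hl.1 with ⟨hMq, hNr⟩ | ⟨hMr, hNq⟩ <;>
        rcases Finset.mem_union.mp hPqr with hPq | hPr
      · exact hnolink N hN P hP ⟨Or.inr ⟨hNr, hPq⟩, ⟨u, Finset.mem_inter.mpr ⟨hu.2, huP⟩⟩⟩
      · exact hnolink M hM P hP ⟨Or.inl ⟨hMq, hPr⟩, ⟨u, Finset.mem_inter.mpr ⟨hu.1, huP⟩⟩⟩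
      · exact hnolink M hM P hP ⟨Or.inr ⟨hMr, hPq⟩, ⟨u, Finset.mem_inter.mpr ⟨hu.1, huP⟩⟩⟩
      · exact hnolink N hN P hP ⟨Or.inl ⟨hNq, hPr⟩, ⟨u, Finset.mem_inter.mpr ⟨hu.2, huP⟩⟩⟩
    · by_cases hET : ∃ M ∈ KT, ∃ N ∈ KT, linkRel q r M N
      · obtain ⟨M, hM, N, hN, hl⟩ := hET
        obtain ⟨u, hu⟩ := hl.2
        rw [Finset.mem_inter] at hu
        have huT : u ∈ KT.sup id := Finset.mem_sup.mpr ⟨M, hM, hu.1⟩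
        have huS : u ∈ KS.sup id := by rw [hfS, ← hfT]; exact huT
        obtain ⟨P, hP, huP⟩ := Finset.mem_sup.mp huS
        have hPqr : P ∈ q ∪ r := (Finset.mem_filter.mp hP).1
        rcases hl.1 with ⟨hMq, hNr⟩ | ⟨hMr, hNq⟩ <;>
          rcases Finset.mem_union.mp hPqr with hPq | hPr
        · exact hnolink P hP N hN ⟨Or.inl ⟨hPq, hNr⟩, ⟨u, Finset.mem_inter.mpr ⟨huP, hu.2⟩⟩⟩
        · exact hnolink P hP M hM ⟨Or.inr ⟨hPr, hMq⟩, ⟨u, Finset.mem_inter.mpr ⟨huP, hu.1⟩⟩⟩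
        · exact hnolink P hP M hM ⟨Or.inl ⟨hPq, hMr⟩, ⟨u, Finset.mem_inter.mpr ⟨huP, hu.1⟩⟩⟩
        · exact hnolink P hP N hN ⟨Or.inr ⟨hPr, hNq⟩, ⟨u, Finset.mem_inter.mpr ⟨huP, hu.2⟩⟩⟩
      · have hKSs : KS = {S} := by
          rw [Finset.eq_singleton_iff_unique_mem]
          refine ⟨hSK, fun M hM => ?_⟩
          rcases Relation.ReflTransGen.cases_tail (Finset.mem_filter.mp hM).2 with h | ⟨d, hd, hl⟩
          · exact h
          · exfalso
            have hdqr : d ∈ q ∪ r := by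
              rcases hl.1 with ⟨h1, _⟩ | ⟨h1, _⟩
              · exact Finset.mem_union_left _ h1
              · exact Finset.mem_union_right _ h1
            exact hES ⟨d, Finset.mem_filter.mpr ⟨hdqr, hd⟩, M, hM, hl⟩
        have hKTs : KT = {T} := by
          rw [Finset.eq_singleton_iff_unique_mem]
          refine ⟨hTK, fun M hM => ?_⟩
          rcases Relation.ReflTransGen.cases_tail (Finset.mem_filter.mp hM).2 with h | ⟨d, hd, hl⟩
          · exact h
          · exfalso
            have hdqr : d ∈ q ∪ r := by
              rcases hl.1 with ⟨h1, _⟩ | ⟨h1, _⟩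
              · exact Finset.mem_union_left _ h1
              · exact Finset.mem_union_right _ h1
            exact hET ⟨d, Finset.mem_filter.mpr ⟨hdqr, hd⟩, M, hM, hl⟩
        have : S = T := by
          have h1 : KS.sup id = S := by rw [hKSs, Finset.sup_singleton]; rfl
          have h2 : KT.sup id = T := by rw [hKTs, Finset.sup_singleton]; rfl
          rw [← h1, ← h2, hfS, hfT]
        exact hST (this ▸ Relation.ReflTransGen.refl)
  · rintro ⟨hne, hconn⟩
    rw [consistent, pjoin, Finset.card_eq_one]
    refine ⟨(q ∪ r).sup id, ?_⟩
    rw [Finset.eq_singleton_iff_nonempty_unique_mem]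
    constructor
    · exact hne.image _
    · intro b hb
      obtain ⟨S, hS, rfl⟩ := Finset.mem_image.mp hb
      congr 1
      apply Finset.filter_true_of_mem
      intro T hT
      exact hconn S hS T hT

/-- Bridge lemma. -/
lemma bridge (p r : Finset (Finset α)) (A B : Finset α)
    (hAB : A ≠ B) (hBne : B.Nonempty)
    (hconnAB : conn (insert A (insert B p)) r A B) :
    ∃ T ∈ r, ∃ T' ∈ r, (T ∩ A).Nonempty ∧ (T' ∩ B).Nonempty ∧ conn p r T T' := by
  by_contra hbr
  push_neg at hbr
  have key : ∀ w, conn (insert A (insert B p)) r A w →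
      (w = A ∨ (w ∈ p ∪ r ∧ ∃ T ∈ r, (T ∩ A).Nonempty ∧ conn p r T w)) := by
    intro w hw
    induction hw with
    | refl => exact Or.inl rfl
    | @tail c w hc hlink ih =>
      obtain ⟨hside, hint⟩ := hlink
      rcases hside with ⟨hcq, hwr⟩ | ⟨hcr, hwq⟩
      · refine Or.inr ⟨Finset.mem_union_right _ hwr, ?_⟩
        by_cases hcA : c = A
        · refine ⟨w, hwr, ?_, Relation.ReflTransGen.refl⟩
          rw [Finset.inter_comm, ← hcA]; exact hint
        rcases ih with rfl | ⟨hcpr, T₀, hT₀r, hT₀A, hpath⟩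
        · exact absurd rfl hcA
        by_cases hcp : c ∈ p
        · exact ⟨T₀, hT₀r, hT₀A, hpath.tail ⟨Or.inl ⟨hcp, hwr⟩, hint⟩⟩
        · have hcB : c = B := by
            rcases Finset.mem_insert.mp hcq with h | h
            · exact absurd h hcA
            rcases Finset.mem_insert.mp h with h | h
            · exact h
            · exact absurd h hcp
          exfalso
          have hBr2 : B ∈ r := by
            rcases Finset.mem_union.mp hcpr with h | h
            · exact absurd h hcp
            · exact hcB ▸ h
          refine hbr T₀ hT₀r B hBr2 hT₀A ?_ (by rw [← hcB]; exact hpath)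
          rw [Finset.inter_self]
          obtain ⟨u, hu⟩ := hint
          exact ⟨u, hcB ▸ (Finset.mem_inter.mp hu).1⟩
      · by_cases hwA : w = A
        · exact Or.inl hwA
        by_cases hwp : w ∈ p
        · refine Or.inr ⟨Finset.mem_union_left _ hwp, ?_⟩
          rcases ih with rfl | ⟨hcpr, T₀, hT₀r, hT₀A, hpath⟩
          · refine ⟨c, hcr, ?_, Relation.ReflTransGen.single ⟨Or.inr ⟨hcr, hwp⟩, hint⟩⟩
            rw [Finset.inter_self]
            obtain ⟨u, hu⟩ := hint
            exact ⟨u, (Finset.mem_inter.mp hu).1⟩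
          · exact ⟨T₀, hT₀r, hT₀A, hpath.tail ⟨Or.inr ⟨hcr, hwp⟩, hint⟩⟩
        · have hwB : w = B := by
            rcases Finset.mem_insert.mp hwq with h | h
            · exact absurd h hwA
            rcases Finset.mem_insert.mp h with h | h
            · exact h
            · exact absurd h hwp
          exfalso
          rcases ih with rfl | ⟨hcpr, T₀, hT₀r, hT₀A, hpath⟩
          · refine hbr c hcr c hcr ?_ (by rw [← hwB]; exact hint) Relation.ReflTransGen.refl
            rw [Finset.inter_self]
            obtain ⟨u, hu⟩ := hint
            exact ⟨u, (Finset.mem_inter.mp hu).1⟩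
          · exact hbr T₀ hT₀r c hcr hT₀A (by rw [← hwB]; exact hint) hpath
  rcases key B hconnAB with h | ⟨hBpr, T₀, hT₀r, hT₀A, hpath⟩
  · exact hAB h.symm
  by_cases hBr : B ∈ r
  · exact hbr T₀ hT₀r B hBr hT₀A (by rwa [Finset.inter_self]) hpath
  · rcases Relation.ReflTransGen.cases_tail hpath with h | ⟨d, hd, hl⟩
    · exact hBr (h ▸ hT₀r)
    · obtain ⟨hside2, hint2⟩ := hl
      rcases hside2 with ⟨_, hBr2⟩ | ⟨hdr, _⟩
      · exact hBr hBr2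
      · exact hbr T₀ hT₀r d hdr hT₀A hint2 hd

/-- Anchor lemma. -/
lemma anchor (p r : Finset (Finset α)) (A B M Rz : Finset α)
    (hA : A ⊆ M) (hB : B ⊆ M) (hAne : A.Nonempty) (hRz : Rz ∈ r)
    (hconnRA : conn (insert A (insert B p)) r Rz A) :
    ∃ Ta ∈ r, (Ta ∩ M).Nonempty ∧ conn p r Rz Ta := by
  have key : ∀ w, conn (insert A (insert B p)) r Rz w →
      ((w ∈ p ∪ r ∧ conn p r Rz w) ∨ ∃ Ta ∈ r, (Ta ∩ M).Nonempty ∧ conn p r Rz Ta) := by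
    intro w hw
    induction hw with
    | refl => exact Or.inl ⟨Finset.mem_union_right _ hRz, Relation.ReflTransGen.refl⟩
    | @tail c w hc hlink ih =>
      rcases ih with ⟨hcpr, hpath⟩ | hanch
      · obtain ⟨hside, hint⟩ := hlink
        rcases hside with ⟨hcq, hwr⟩ | ⟨hcr, hwq⟩
        · by_cases hcp : c ∈ p
          · exact Or.inl ⟨Finset.mem_union_right _ hwr,
              hpath.tail ⟨Or.inl ⟨hcp, hwr⟩, hint⟩⟩
          · have hcM : c ⊆ M := by
              rcases Finset.mem_insert.mp hcq with h | h
              · exact h ▸ hA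
              rcases Finset.mem_insert.mp h with h | h
              · exact h ▸ hB
              · exact absurd h hcp
            have hcr2 : c ∈ r := by
              rcases Finset.mem_union.mp hcpr with h | h
              · exact absurd h hcp
              · exact h
            refine Or.inr ⟨c, hcr2, ?_, hpath⟩
            obtain ⟨u, hu⟩ := hint
            exact ⟨u, Finset.mem_inter.mpr ⟨(Finset.mem_inter.mp hu).1,
              hcM (Finset.mem_inter.mp hu).1⟩⟩
        · by_cases hwp : w ∈ p
          · exact Or.inl ⟨Finset.mem_union_left _ hwp,
              hpath.tail ⟨Or.inr ⟨hcr, hwp⟩, hint⟩⟩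
          · have hwM : w ⊆ M := by
              rcases Finset.mem_insert.mp hwq with h | h
              · exact h ▸ hA
              rcases Finset.mem_insert.mp h with h | h
              · exact h ▸ hB
              · exact absurd h hwp
            refine Or.inr ⟨c, hcr, ?_, hpath⟩
            obtain ⟨u, hu⟩ := hint
            have hu' := Finset.mem_inter.mp hu
            exact ⟨u, Finset.mem_inter.mpr ⟨hu'.1, hwM hu'.2⟩⟩
      · exact Or.inr hanch
  rcases key A hconnRA with ⟨hApr, hpath⟩ | hanch
  · by_cases hAr : A ∈ r
    · refine ⟨A, hAr, ?_, hpath⟩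
      obtain ⟨u, hu⟩ := hAne
      exact ⟨u, Finset.mem_inter.mpr ⟨hu, hA hu⟩⟩
    · rcases Relation.ReflTransGen.cases_tail hpath with h | ⟨d, hd, hl⟩
      · exact absurd (h ▸ hRz) hAr
      · obtain ⟨hside2, hint2⟩ := hl
        rcases hside2 with ⟨_, hAr2⟩ | ⟨hdr, _⟩
        · exact absurd hAr2 hAr
        · refine ⟨d, hdr, ?_, hd⟩
          obtain ⟨u, hu⟩ := hint2
          have hu' := Finset.mem_inter.mp hu
          exact ⟨u, Finset.mem_inter.mpr ⟨hu'.1, hA hu'.2⟩⟩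
  · exact hanch

lemma main_step (p r : Finset (Finset α)) (M A0 B0 A' B' Rz : Finset α)
    (hA0 : A0 ⊆ M) (hB0 : B0 ⊆ M) (hM : A' ∪ B' = M) (hRz : Rz ∈ r)
    (hanchor : ∃ Ta ∈ r, (Ta ∩ M).Nonempty ∧ conn p r Rz Ta)
    (hbr : ∃ Tb ∈ r, ∃ Tb' ∈ r, (Tb ∩ A').Nonempty ∧ (Tb' ∩ B').Nonempty ∧ conn p r Tb Tb')
    (hcons0 : consistent (insert A0 (insert B0 p)) r) :
    consistent (insert A' (insert B' p)) r := by
  set q : Finset (Finset α) := insert A' (insert B' p) with hq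
  have hpq : p ⊆ q := fun s hs => Finset.mem_insert_of_mem (Finset.mem_insert_of_mem hs)
  have hA'q : A' ∈ q := Finset.mem_insert_self _ _
  have hB'q : B' ∈ q := Finset.mem_insert_of_mem (Finset.mem_insert_self _ _)
  have hA'M : A' ⊆ M := hM ▸ Finset.subset_union_left
  have hB'M : B' ⊆ M := hM ▸ Finset.subset_union_right
  obtain ⟨Tb, hTbr, Tb', hTb'r, hTbA, hTbB, hTbc⟩ := hbr
  have hcqTb : conn q r Tb Tb' := conn_mono hpq hTbc
  have edgeA : ∀ T ∈ r, (T ∩ A').Nonempty → conn q r T A' := fun T hT h =>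
    Relation.ReflTransGen.single ⟨Or.inr ⟨hT, hA'q⟩, h⟩
  have edgeA' : ∀ T ∈ r, (T ∩ A').Nonempty → conn q r A' T := fun T hT h =>
    Relation.ReflTransGen.single ⟨Or.inl ⟨hA'q, hT⟩, by rwa [Finset.inter_comm]⟩
  have edgeB : ∀ T ∈ r, (T ∩ B').Nonempty → conn q r T B' := fun T hT h =>
    Relation.ReflTransGen.single ⟨Or.inr ⟨hT, hB'q⟩, h⟩
  have edgeB' : ∀ T ∈ r, (T ∩ B').Nonempty → conn q r B' T := fun T hT h =>
    Relation.ReflTransGen.single ⟨Or.inl ⟨hB'q, hT⟩, by rwa [Finset.inter_comm]⟩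
  have hsplit : ∀ T : Finset α, (T ∩ M).Nonempty → (T ∩ A').Nonempty ∨ (T ∩ B').Nonempty := by
    intro T h
    rw [← hM, Finset.inter_union_distrib_left] at h
    rcases h with ⟨u, hu⟩
    rcases Finset.mem_union.mp hu with h' | h'
    · exact Or.inl ⟨u, h'⟩
    · exact Or.inr ⟨u, h'⟩
  have toTb : ∀ T ∈ r, (T ∩ M).Nonempty → conn q r T Tb' := by
    intro T hT h
    rcases hsplit T h with h' | h'
    · exact ((edgeA T hT h').trans (edgeA' Tb hTbr hTbA)).trans hcqTb
    · exact (edgeB T hT h').trans (edgeB' Tb' hTb'r hTbB)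
  have hTR : ∀ T ∈ r, (T ∩ M).Nonempty → conn q r T Rz := by
    obtain ⟨Ta, hTar, hTaM, hTac⟩ := hanchor
    intro T hT h
    exact ((toTb T hT h).trans (conn_symm (toTb Ta hTar hTaM))).trans
      (conn_symm (conn_mono hpq hTac))
  obtain ⟨hne0, hall⟩ := (consistent_iff _ _).mp hcons0
  have htrans : ∀ w, conn (insert A0 (insert B0 p)) r Rz w → w ∈ p ∪ r → conn q r w Rz := by
    intro w hw
    induction hw with
    | refl => intro _; exact Relation.ReflTransGen.refl
    | @tail c w hc hlink ih =>
      intro hwpr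
      obtain ⟨hside, hint⟩ := hlink
      rcases hside with ⟨hcq0, hwr⟩ | ⟨hcr, hwq0⟩
      · by_cases hcp : c ∈ p
        · exact Relation.ReflTransGen.head
            ⟨Or.inr ⟨hwr, hpq hcp⟩, by rwa [Finset.inter_comm]⟩
            (ih (Finset.mem_union_left _ hcp))
        · have hcM : c ⊆ M := by
            rcases Finset.mem_insert.mp hcq0 with h | h
            · exact h ▸ hA0
            rcases Finset.mem_insert.mp h with h | h
            · exact h ▸ hB0
            · exact absurd h hcp
          apply hTR w hwr
          obtain ⟨u, hu⟩ := hint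
          have hu' := Finset.mem_inter.mp hu
          exact ⟨u, Finset.mem_inter.mpr ⟨hu'.2, hcM hu'.1⟩⟩
      · by_cases hwp : w ∈ p
        · exact Relation.ReflTransGen.head
            ⟨Or.inl ⟨hpq hwp, hcr⟩, by rwa [Finset.inter_comm]⟩
            (ih (Finset.mem_union_right _ hcr))
        · have hwr : w ∈ r := by
            rcases Finset.mem_union.mp hwpr with h | h
            · exact absurd h hwp
            · exact h
          have hwM : w ⊆ M := by
            rcases Finset.mem_insert.mp hwq0 with h | h
            · exact h ▸ hA0
            rcases Finset.mem_insert.mp h with h | h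
            · exact h ▸ hB0
            · exact absurd h hwp
          apply hTR w hwr
          obtain ⟨u, hu⟩ := hint
          have hu' := Finset.mem_inter.mp hu
          exact ⟨u, Finset.mem_inter.mpr ⟨hu'.2, hwM hu'.2⟩⟩
  rw [consistent_iff]
  refine ⟨⟨Rz, Finset.mem_union_right _ hRz⟩, ?_⟩
  have hq0p : p ⊆ insert A0 (insert B0 p) := fun s hs =>
    Finset.mem_insert_of_mem (Finset.mem_insert_of_mem hs)
  have hAll1 : ∀ S ∈ q ∪ r, conn q r S Rz := by
    intro S hS
    rcases Finset.mem_union.mp hS with hSq | hSr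
    · rcases Finset.mem_insert.mp hSq with rfl | hSq'
      · refine (edgeA' Tb hTbr hTbA).trans (hTR Tb hTbr ?_)
        obtain ⟨u, hu⟩ := hTbA
        have hu' := Finset.mem_inter.mp hu
        exact ⟨u, Finset.mem_inter.mpr ⟨hu'.1, hA'M hu'.2⟩⟩
      rcases Finset.mem_insert.mp hSq' with rfl | hSp
      · refine (edgeB' Tb' hTb'r hTbB).trans (hTR Tb' hTb'r ?_)
        obtain ⟨u, hu⟩ := hTbB
        have hu' := Finset.mem_inter.mp hu
        exact ⟨u, Finset.mem_inter.mpr ⟨hu'.1, hB'M hu'.2⟩⟩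
      · exact htrans S
          (hall Rz (Finset.mem_union_right _ hRz) S (Finset.mem_union_left _ (hq0p hSp)))
          (Finset.mem_union_left _ hSp)
    · exact htrans S
        (hall Rz (Finset.mem_union_right _ hRz) S (Finset.mem_union_right _ hSr))
        (Finset.mem_union_right _ hSr)
  intro S hS T hT
  exact (hAll1 S hS).trans (conn_symm (hAll1 T hT))

/-- Joint domination: `{p₁, p₂}` jointly dominates `p₀`. -/
theorem joint_domination (z : α) (U : Finset α) (p : Finset (Finset α))
    (hp : IsPattern z U p) (hc : Complete z p)
    (X Y Z : Finset α) (hX : X ⊆ U) (hY : Y ⊆ U) (hZ : Z ⊆ U)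
    (hns : ∀ S ∈ p, ∀ u ∈ S, u ∈ X ∪ Y ∪ Z → S = {u}) :
    ∀ r : Finset (Finset α), IsPattern z U r →
      consistent (insert (X ∪ Y) (insert Z p)) r →
      consistent (insert (Y ∪ Z) (insert X p)) r ∨
      consistent (insert (X ∪ Z) (insert Y p)) r := by
  intro r hr hcons
  obtain ⟨Rz, ⟨hRzr, hzRz⟩, -⟩ := hr.2
  by_cases hX0 : X = ∅
  · right
    have e1 : X ∪ Z = Z := by rw [hX0, Finset.empty_union]
    have e2 : X ∪ Y = Y := by rw [hX0, Finset.empty_union]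
    rw [e1]
    rw [e2] at hcons
    rwa [Finset.insert_comm] at hcons
  by_cases hY0 : Y = ∅
  · left
    have e1 : Y ∪ Z = Z := by rw [hY0, Finset.empty_union]
    have e2 : X ∪ Y = X := by rw [hY0, Finset.union_empty]
    rw [e1]
    rw [e2] at hcons
    rwa [Finset.insert_comm] at hcons
  have hXne : X.Nonempty := Finset.nonempty_iff_ne_empty.mpr hX0
  have hYne : Y.Nonempty := Finset.nonempty_iff_ne_empty.mpr hY0
  set q₀ : Finset (Finset α) := insert (X ∪ Y) (insert Z p) with hq₀
  have hAq₀ : X ∪ Y ∈ q₀ := Finset.mem_insert_self _ _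
  have hBq₀ : Z ∈ q₀ := Finset.mem_insert_of_mem (Finset.mem_insert_self _ _)
  obtain ⟨hne0, hall⟩ := (consistent_iff q₀ r).mp hcons
  have hZne : Z.Nonempty := by
    rw [Finset.nonempty_iff_ne_empty]
    intro h
    have hemp : (∅ : Finset α) ∈ q₀ ∪ r := Finset.mem_union_left _ (h ▸ hBq₀)
    have hce := hall ∅ hemp Rz (Finset.mem_union_right _ hRzr)
    have := conn_empty hce
    rw [this] at hzRz
    exact absurd hzRz (Finset.notMem_empty z)
  have hNZ : ∃ T ∈ r, (T ∩ Z).Nonempty := by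
    have hcZR : conn q₀ r Z Rz :=
      hall Z (Finset.mem_union_left _ hBq₀) Rz (Finset.mem_union_right _ hRzr)
    rcases Relation.ReflTransGen.cases_head hcZR with h | ⟨c, hl, -⟩
    · exact ⟨Rz, hRzr, by rw [← h, Finset.inter_self]; exact hZne⟩
    · obtain ⟨hside, hint⟩ := hl
      rcases hside with ⟨-, hcr⟩ | ⟨hZr, -⟩
      · exact ⟨c, hcr, by rwa [Finset.inter_comm] at hint⟩
      · exact ⟨Z, hZr, by rw [Finset.inter_self]; exact hZne⟩
  have hbr0 : ∃ T ∈ r, ∃ T' ∈ r, (T ∩ (X ∪ Y)).Nonempty ∧ (T' ∩ Z).Nonempty ∧ conn p r T T' := by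
    by_cases hAB : X ∪ Y = Z
    · obtain ⟨T, hT, hTZ⟩ := hNZ
      exact ⟨T, hT, T, hT, by rw [hAB]; exact hTZ, hTZ, Relation.ReflTransGen.refl⟩
    · exact bridge p r (X ∪ Y) Z hAB hZne
        (hall (X ∪ Y) (Finset.mem_union_left _ hAq₀) Z (Finset.mem_union_left _ hBq₀))
  have hanch : ∃ Ta ∈ r, (Ta ∩ (X ∪ Y ∪ Z)).Nonempty ∧ conn p r Rz Ta := by
    refine anchor p r (X ∪ Y) Z (X ∪ Y ∪ Z) Rz Finset.subset_union_left
      Finset.subset_union_right ?_ hRzr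
      (hall Rz (Finset.mem_union_right _ hRzr) (X ∪ Y) (Finset.mem_union_left _ hAq₀))
    obtain ⟨u, hu⟩ := hXne
    exact ⟨u, Finset.mem_union_left _ hu⟩
  obtain ⟨Tb, hTbr, Tb', hTb'r, hTbA, hTbZ, hTbc⟩ := hbr0
  have hsplitXY : (Tb ∩ X).Nonempty ∨ (Tb ∩ Y).Nonempty := by
    obtain ⟨u, hu⟩ := hTbA
    rw [Finset.inter_union_distrib_left] at hu
    rcases Finset.mem_union.mp hu with h' | h'
    · exact Or.inl ⟨u, h'⟩
    · exact Or.inr ⟨u, h'⟩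
  have hTb'Y : (Tb' ∩ (Y ∪ Z)).Nonempty := by
    obtain ⟨u, hu⟩ := hTbZ
    have hu' := Finset.mem_inter.mp hu
    exact ⟨u, Finset.mem_inter.mpr ⟨hu'.1, Finset.mem_union_right _ hu'.2⟩⟩
  have hTb'X : (Tb' ∩ (X ∪ Z)).Nonempty := by
    obtain ⟨u, hu⟩ := hTbZ
    have hu' := Finset.mem_inter.mp hu
    exact ⟨u, Finset.mem_inter.mpr ⟨hu'.1, Finset.mem_union_right _ hu'.2⟩⟩
  rcases hsplitXY with hbX | hbY
  · left
    have := main_step p r (X ∪ Y ∪ Z) (X ∪ Y) Z X (Y ∪ Z) Rz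
      Finset.subset_union_left Finset.subset_union_right
      (Finset.union_assoc X Y Z).symm hRzr hanch
      ⟨Tb, hTbr, Tb', hTb'r, hbX, hTb'Y, hTbc⟩ hcons
    rwa [Finset.insert_comm] at this
  · right
    have hMeq : Y ∪ (X ∪ Z) = X ∪ Y ∪ Z := by
      rw [← Finset.union_assoc, Finset.union_comm Y X, Finset.union_assoc]
    have := main_step p r (X ∪ Y ∪ Z) (X ∪ Y) Z Y (X ∪ Z) Rz
      Finset.subset_union_left Finset.subset_union_right
      hMeq hRzr hanch
      ⟨Tb, hTbr, Tb', hTb'r, hbY, hTb'X, hTbc⟩ hcons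
    rwa [Finset.insert_comm] at this


end PatternST
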